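/- Let N ≥ 2 and 1 ≤ m ≤ N - 1 be integers, and set q* = m/N. Then the binomial probability mass satisfies C(N, m)·(q*)^m·(1-q*)^{N-m} ≤ 1/√(2π·N·q*·(1-q*)), with strict inequality. -/

import Mathlib

open Real Filter Stirling Topology

lemma sqrtpi_le' (n : ℕ) : Real.sqrt π ≤ stirlingSeq (n + 1) := by
  have h := stirlingSeq'_antitone
  have ht : Tendsto (stirlingSeq ∘ Nat.succ) atTop (𝓝 (Real.sqrt π)) := by
    rw [Function.comp_def]
    simpa using (Filter.tendsto_add_atTop_iff_nat 1).mpr tendsto_stirlingSeq_sqrt_pi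
  exact h.le_of_tendsto ht n

lemma strict_dec (n : ℕ) : stirlingSeq (n + 2) < stirlingSeq (n + 1) := by
  have hs := log_stirlingSeq_diff_hasSum n
  have hpos : 0 < Real.log (stirlingSeq (n + 1)) - Real.log (stirlingSeq (n + 2)) := by
    rw [← hs.tsum_eq]
    refine Summable.tsum_pos hs.summable (fun i => by positivity) 0 (by positivity)
  have := sub_pos.mp hpos
  exact (Real.log_lt_log_iff (stirlingSeq'_pos (n+1)) (stirlingSeq'_pos n)).mp this

lemma sqrtpi_lt {n : ℕ} (hn : 1 ≤ n) : Real.sqrt π < stirlingSeq n := by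
  obtain ⟨n, rfl⟩ := Nat.exists_eq_add_of_le hn
  rw [add_comm]
  exact lt_of_le_of_lt (sqrtpi_le' (n + 1)) (strict_dec n)

lemma sPos {n : ℕ} (hn : 1 ≤ n) : 0 < stirlingSeq n := by
  obtain ⟨n, rfl⟩ := Nat.exists_eq_add_of_le hn
  rw [add_comm]; exact stirlingSeq'_pos n

lemma anti' {i j : ℕ} (hi : 1 ≤ i) (hij : i ≤ j) : stirlingSeq j ≤ stirlingSeq i := by
  obtain ⟨i, rfl⟩ := Nat.exists_eq_add_of_le hi
  obtain ⟨d, rfl⟩ := Nat.exists_eq_add_of_le hij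
  have := stirlingSeq'_antitone (Nat.le_add_right i d)
  simpa [Function.comp, Nat.succ_eq_add_one, add_comm, add_assoc, add_left_comm] using this

lemma fact_eq (n : ℕ) (hn : 1 ≤ n) :
    (n.factorial : ℝ) = stirlingSeq n * (Real.sqrt (2 * n) * ((n : ℝ) / Real.exp 1) ^ n) := by
  have hd : Real.sqrt (2 * n) * ((n : ℝ) / Real.exp 1) ^ n ≠ 0 := by
    have : (0:ℝ) < n := by exact_mod_cast hn
    positivity
  rw [stirlingSeq, div_mul_cancel₀ _ hd]

theorem stmt_15 (N m : ℕ) (hN : 2 ≤ N) (hm1 : 1 ≤ m) (hmN : m ≤ N - 1) :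
    (N.choose m : ℝ) * ((m : ℝ) / (N : ℝ)) ^ m *
        (1 - (m : ℝ) / (N : ℝ)) ^ (N - m) <
      1 / Real.sqrt (2 * π * (N : ℝ) * ((m : ℝ) / (N : ℝ)) *
        (1 - (m : ℝ) / (N : ℝ))) := by
  obtain ⟨k, rfl⟩ : ∃ k, N = m + k := ⟨N - m, by omega⟩
  have hk1 : 1 ≤ k := by omega
  simp only [Nat.add_sub_cancel_left]
  have hM : (0:ℝ) < (m:ℝ) := by exact_mod_cast hm1
  have hK : (0:ℝ) < (k:ℝ) := by exact_mod_cast hk1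
  have hS : (0:ℝ) < ((m:ℝ) + k) := by linarith
  have hcast : ((m + k : ℕ) : ℝ) = (m:ℝ) + k := by push_cast; ring
  rw [hcast]
  have h1q : 1 - (m:ℝ) / ((m:ℝ) + k) = (k:ℝ) / ((m:ℝ) + k) := by field_simp; ring
  rw [h1q]
  set a := stirlingSeq (m + k) with ha
  set b := stirlingSeq m with hb
  set c := stirlingSeq k with hc
  have hbp : 0 < b := sPos hm1
  have hcp : 0 < c := sPos hk1
  have hap : 0 < a := sPos (by omega)
  have hsm : (0:ℝ) < Real.sqrt (2 * m) := Real.sqrt_pos.mpr (by linarith)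
  have hsk : (0:ℝ) < Real.sqrt (2 * k) := Real.sqrt_pos.mpr (by linarith)
  have hsS : (0:ℝ) < Real.sqrt (2 * ((m:ℝ) + k)) := Real.sqrt_pos.mpr (by linarith)
  have hπ : (0:ℝ) < Real.sqrt π := Real.sqrt_pos.mpr pi_pos
  have hL : ((m + k).choose m : ℝ) * ((m:ℝ) / ((m:ℝ) + k)) ^ m * ((k:ℝ) / ((m:ℝ) + k)) ^ k
      = (a / (b * c)) * (Real.sqrt (2 * ((m:ℝ) + k)) / (Real.sqrt (2 * m) * Real.sqrt (2 * k))) := by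
    rw [Nat.cast_choose ℝ (Nat.le_add_right m k), Nat.add_sub_cancel_left,
      fact_eq (m + k) (by omega), fact_eq m hm1, fact_eq k hk1, hcast, pow_add,
      ← ha, ← hb, ← hc]
    have he : Real.exp 1 ≠ 0 := (Real.exp_pos 1).ne'
    have hmk : (m:ℝ) + k ≠ 0 := hS.ne'
    field_simp
    have h2 : ((m:ℝ) + k)⁻¹ ^ m * ((m:ℝ) + k) ^ m = 1 := by
      rw [← mul_pow, inv_mul_cancel₀ hmk, one_pow]
    have h3 : ((m:ℝ) + k)⁻¹ ^ k * ((m:ℝ) + k) ^ k = 1 := by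
      rw [← mul_pow, inv_mul_cancel₀ hmk, one_pow]
    simp only [div_eq_mul_inv, mul_pow]
    linear_combination ((m:ℝ) ^ m * (k:ℝ) ^ k * (Real.exp 1)⁻¹ ^ m * (Real.exp 1)⁻¹ ^ k
      * (((m:ℝ) + k)⁻¹ ^ k * ((m:ℝ) + k) ^ k)) * h2
      + ((m:ℝ) ^ m * (k:ℝ) ^ k * (Real.exp 1)⁻¹ ^ m * (Real.exp 1)⁻¹ ^ k) * h3
  rw [hL]
  have hR : 1 / Real.sqrt (2 * π * ((m:ℝ) + k) * ((m:ℝ) / ((m:ℝ) + k)) * ((k:ℝ) / ((m:ℝ) + k)))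
      = (1 / Real.sqrt π) *
        (Real.sqrt (2 * ((m:ℝ) + k)) / (Real.sqrt (2 * m) * Real.sqrt (2 * k))) := by
    have h1 : 2 * π * ((m:ℝ) + k) * ((m:ℝ) / ((m:ℝ) + k)) * ((k:ℝ) / ((m:ℝ) + k))
        = π * ((2 * m) * (2 * k) / (2 * ((m:ℝ) + k))) := by field_simp
    rw [h1, Real.sqrt_mul pi_pos.le, Real.sqrt_div (by positivity),
      Real.sqrt_mul (by linarith : (0:ℝ) ≤ 2 * (m:ℝ))]
    field_simp
  rw [hR]
  have hkey : a / (b * c) < 1 / Real.sqrt π := by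
    rw [div_lt_div_iff₀ (by positivity) hπ]
    have h1 : a * Real.sqrt π < a * c := by
      exact mul_lt_mul_of_pos_left (sqrtpi_lt hk1) hap
    have h2 : a * c ≤ b * c := mul_le_mul_of_nonneg_right (anti' hm1 (Nat.le_add_right m k)) hcp.le
    calc a * Real.sqrt π < a * c := h1
      _ ≤ b * c := h2
      _ = 1 * (b * c) := (one_mul _).symm
  exact mul_lt_mul_of_pos_right hkey (by positivity)
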